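/- Let t, t' : Fin n → k and let D, D' : A → A be k-linear maps satisfying the graded Leibniz rule with D(x_i) = x_i * w_t and D'(x_i) = x_i * w_{t'} for all i ∈ Fin n. Then the following are equivalent: (a) there exists a k-algebra automorphism f : A ≃ₐ[k] A such that f(x_i) is homogeneous of degree 1 for every i and f(D a) = D'(f a) for all a ∈ A; (b) there exists an invertible n×n matrix M over k such that t' s = ∑_{j} t j * M j s for every s ∈ Fin n. -/

import Mathlib

open MvPolynomial

namespace Stmt2Aux

variable {k : Type*} [Field k] {n : ℕ}

lemma degree_one_eq_single {m : Fin n →₀ ℕ} (hm : m.degree = 1) :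
    ∃ s, m = Finsupp.single s 1 := by
  have hne : m ≠ 0 := by
    rintro rfl; simp [map_zero] at hm
  obtain ⟨s, hs⟩ : ∃ s, m s ≠ 0 := by
    by_contra h; push_neg at h; exact hne (Finsupp.ext fun j => h j)
  have h1 : m s = 1 := le_antisymm (hm ▸ Finsupp.le_degree s m) (Nat.one_le_iff_ne_zero.mpr hs)
  refine ⟨s, Finsupp.ext fun j => ?_⟩
  rcases eq_or_ne j s with rfl | hj
  · simp [h1]
  · rw [Finsupp.single_apply, if_neg (Ne.symm hj)]
    by_contra hj0
    have hsub : ({s, j} : Finset (Fin n)) ⊆ m.support := by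
      intro x hx
      simp only [Finset.mem_insert, Finset.mem_singleton] at hx
      rcases hx with rfl | rfl
      · exact Finsupp.mem_support_iff.mpr hs
      · exact Finsupp.mem_support_iff.mpr hj0
    have h2 : m s + m j ≤ m.degree := by
      rw [Finsupp.degree, ← Finset.sum_pair (Ne.symm hj)]
      exact Finset.sum_le_sum_of_subset hsub
    rw [h1, hm] at h2
    omega

lemma expand_deg_one {p : MvPolynomial (Fin n) k} (hp : p.IsHomogeneous 1) :
    p = ∑ s, coeff (Finsupp.single s 1) p • X s := by
  ext m
  rw [coeff_sum]
  simp_rw [coeff_smul, coeff_X', smul_eq_mul]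
  by_cases hm : m.degree = 1
  · obtain ⟨s0, rfl⟩ := degree_one_eq_single hm
    rw [Finset.sum_eq_single s0]
    · rw [if_pos rfl, mul_one]
    · intro b _ hb
      rw [if_neg, mul_zero]
      exact fun h => hb (Finsupp.single_left_injective one_ne_zero h)
    · intro h; exact absurd (Finset.mem_univ s0) h
  · rw [hp.coeff_eq_zero hm, Finset.sum_eq_zero]
    intro s _
    rw [if_neg, mul_zero]
    intro h
    apply hm
    rw [← h]
    simp [Finsupp.degree_single]

lemma coeff_single_sum (c : Fin n → k) (s : Fin n) :
    coeff (Finsupp.single s 1) (∑ j, c j • X j) = c s := by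
  rw [coeff_sum]
  simp_rw [coeff_smul, coeff_X', smul_eq_mul]
  rw [Finset.sum_eq_single s]
  · rw [if_pos rfl, mul_one]
  · intro b _ hb
    rw [if_neg, mul_zero]
    exact fun h => hb (Finsupp.single_left_injective one_ne_zero h)
  · intro h; exact absurd (Finset.mem_univ s) h

lemma alghom_isHomogeneous' (f : MvPolynomial (Fin n) k →ₐ[k] MvPolynomial (Fin n) k)
    (hf : ∀ i, (f (X i)).IsHomogeneous 1)
    {d : ℕ} {p : MvPolynomial (Fin n) k} (hp : p.IsHomogeneous d) :
    (f p).IsHomogeneous d := by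
  have h1 : f p = aeval (f ∘ X) p := by conv_lhs => rw [aeval_unique f]
  rw [h1]
  simpa using hp.aeval (f ∘ X) hf

lemma D_one (D : MvPolynomial (Fin n) k →ₗ[k] MvPolynomial (Fin n) k)
    (hLeib : ∀ (d : ℕ) (a b : MvPolynomial (Fin n) k), a.IsHomogeneous d →
      D (a * b) = D a * b + ((-1 : k) ^ d) • (a * D b)) : D 1 = 0 := by
  have h := hLeib 0 1 1 (isHomogeneous_one _ _)
  simp only [mul_one, one_mul, pow_zero, one_smul] at h
  exact (left_eq_add.mp h)

lemma D_unique (D D' : MvPolynomial (Fin n) k →ₗ[k] MvPolynomial (Fin n) k)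
    (hLeib : ∀ (d : ℕ) (a b : MvPolynomial (Fin n) k), a.IsHomogeneous d →
      D (a * b) = D a * b + ((-1 : k) ^ d) • (a * D b))
    (hLeib' : ∀ (d : ℕ) (a b : MvPolynomial (Fin n) k), a.IsHomogeneous d →
      D' (a * b) = D' a * b + ((-1 : k) ^ d) • (a * D' b))
    (hX : ∀ i, D (X i) = D' (X i)) (p : MvPolynomial (Fin n) k) : D p = D' p := by
  induction p using MvPolynomial.induction_on with
  | C a =>
    have h1 : (C a : MvPolynomial (Fin n) k) = a • 1 := by rw [smul_eq_C_mul, mul_one]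
    rw [h1, map_smul, map_smul, D_one D hLeib, D_one D' hLeib']
  | add p q hp hq => rw [map_add, map_add, hp, hq]
  | mul_X p i hp =>
    rw [mul_comm, hLeib 1 (X i) p (isHomogeneous_X _ _), hLeib' 1 (X i) p (isHomogeneous_X _ _),
      hX i, hp]

lemma aeval_lin (P Q : Matrix (Fin n) (Fin n) k) (h : Q * P = 1) (i : Fin n) :
    aeval (fun j => ∑ s, P j s • (X s : MvPolynomial (Fin n) k))
      (∑ s, Q i s • (X s : MvPolynomial (Fin n) k)) = X i := by
  rw [map_sum]
  simp_rw [map_smul, aeval_X, Finset.smul_sum, smul_smul]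
  rw [Finset.sum_comm]
  simp_rw [← Finset.sum_smul, ← Matrix.mul_apply, h, Matrix.one_apply]
  simp [ite_smul]

lemma exists_linear_preimage (f : MvPolynomial (Fin n) k ≃ₐ[k] MvPolynomial (Fin n) k)
    (hf : ∀ i, (f (X i)).IsHomogeneous 1) (i : Fin n) :
    ∃ p : MvPolynomial (Fin n) k, p.IsHomogeneous 1 ∧ f p = X i := by
  set q := f.symm (X i) with hq
  refine ⟨homogeneousComponent 1 q, homogeneousComponent_isHomogeneous 1 q, ?_⟩
  have hfq : f q = X i := f.apply_symm_apply (X i)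
  have hXi : (X i : MvPolynomial (Fin n) k) =
      ∑ d ∈ Finset.range (q.totalDegree + 1), f (homogeneousComponent d q) := by
    rw [← map_sum, sum_homogeneousComponent, hfq]
  have h2 : ∀ d, homogeneousComponent 1 (f (homogeneousComponent d q)) =
      if (1 : ℕ) = d then f (homogeneousComponent d q) else 0 := fun d =>
    homogeneousComponent_of_mem ((mem_homogeneousSubmodule _ _).mpr
      (alghom_isHomogeneous' f.toAlgHom hf (homogeneousComponent_isHomogeneous d q)))
  have hXhc : homogeneousComponent 1 (X i : MvPolynomial (Fin n) k) = X i := by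
    rw [homogeneousComponent_of_mem ((mem_homogeneousSubmodule _ _).mpr
      (isHomogeneous_X k i))]
    exact if_pos rfl
  have h4 : (X i : MvPolynomial (Fin n) k) =
      if 1 ∈ Finset.range (q.totalDegree + 1) then f (homogeneousComponent 1 q) else 0 := by
    calc (X i : MvPolynomial (Fin n) k) = homogeneousComponent 1 (X i) := hXhc.symm
      _ = homogeneousComponent 1 (∑ d ∈ Finset.range (q.totalDegree + 1),
            f (homogeneousComponent d q)) := by rw [← hXi]
      _ = ∑ d ∈ Finset.range (q.totalDegree + 1),
            homogeneousComponent 1 (f (homogeneousComponent d q)) := map_sum _ _ _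
      _ = ∑ d ∈ Finset.range (q.totalDegree + 1),
            if (1 : ℕ) = d then f (homogeneousComponent d q) else 0 :=
        Finset.sum_congr rfl fun d _ => h2 d
      _ = _ := Finset.sum_ite_eq _ 1 _
  by_cases hmem : 1 ∈ Finset.range (q.totalDegree + 1)
  · rw [if_pos hmem] at h4; exact h4.symm
  · rw [if_neg hmem] at h4; exact absurd h4 (X_ne_zero i)

end Stmt2Aux

open Stmt2Aux

/-- Two DG polynomial algebras `(A, D)` (with parameters `t`) and `(A, D')`
(with parameters `t'`) are DG-isomorphic if and only if `t' = t · M` for some invertible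
matrix `M`. -/
theorem stmt_2 (k : Type*) [Field k] [CharZero k] (n : ℕ) (t t' : Fin n → k)
    (D D' : MvPolynomial (Fin n) k →ₗ[k] MvPolynomial (Fin n) k)
    (hLeib : ∀ (d : ℕ) (a b : MvPolynomial (Fin n) k), a.IsHomogeneous d →
      D (a * b) = D a * b + ((-1 : k) ^ d) • (a * D b))
    (hLeib' : ∀ (d : ℕ) (a b : MvPolynomial (Fin n) k), a.IsHomogeneous d →
      D' (a * b) = D' a * b + ((-1 : k) ^ d) • (a * D' b))
    (hD : ∀ i : Fin n, D (X i) = X i * ∑ j : Fin n, t j • X j)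
    (hD' : ∀ i : Fin n, D' (X i) = X i * ∑ j : Fin n, t' j • X j) :
    (∃ f : MvPolynomial (Fin n) k ≃ₐ[k] MvPolynomial (Fin n) k,
        (∀ i : Fin n, (f (X i)).IsHomogeneous 1) ∧
        (∀ a : MvPolynomial (Fin n) k, f (D a) = D' (f a))) ↔
    (∃ M : Matrix (Fin n) (Fin n) k, IsUnit M ∧
        ∀ s : Fin n, t' s = ∑ j : Fin n, t j * M j s) := by
  constructor
  · rintro ⟨f, hf1, hfD⟩
    classical
    set M : Matrix (Fin n) (Fin n) k :=
      Matrix.of (fun j s => coeff (Finsupp.single s 1) (f (X j))) with hMdef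
    have hfX : ∀ j, f (X j) = ∑ s, M j s • X s := fun j => expand_deg_one (hf1 j)
    have h2 : ∀ i, D' (f (X i)) = f (X i) * (∑ j, t' j • X j) := by
      intro i
      rw [hfX i, map_sum]
      simp_rw [map_smul, hD', ← smul_mul_assoc]
      rw [← Finset.sum_mul]
    have hw : ∀ i, f (X i) * f (∑ j, t j • X j) = f (X i) * (∑ j, t' j • X j) := by
      intro i
      have h1 := hfD (X i)
      rw [hD i, map_mul, h2 i] at h1
      exact h1
    have hne : ∀ i, f (X i) ≠ (0 : MvPolynomial (Fin n) k) := fun i h =>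
      X_ne_zero i (f.injective (by rw [h, map_zero]))
    have hcan : ∀ i : Fin n, f (∑ j, t j • X j) = ∑ j, t' j • X j := fun i =>
      mul_left_cancel₀ (hne i) (hw i)
    refine ⟨M, ?_, ?_⟩
    · choose p hp1 hfp using exists_linear_preimage f hf1
      set Cm : Matrix (Fin n) (Fin n) k :=
        Matrix.of (fun i j => coeff (Finsupp.single j 1) (p i)) with hCdef
      have hCM : Cm * M = 1 := by
        ext i s
        rw [Matrix.mul_apply, Matrix.one_apply]
        have hpi : p i = ∑ j, Cm i j • X j := expand_deg_one (hp1 i)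
        have hfpi : f (p i) = ∑ j, Cm i j • f (X j) := by
          conv_lhs => rw [hpi]
          rw [map_sum]; simp_rw [map_smul]
        calc ∑ j, Cm i j * M j s
            = coeff (Finsupp.single s 1) (∑ j, Cm i j • f (X j)) := by
              rw [coeff_sum]; simp_rw [coeff_smul, smul_eq_mul]; rfl
          _ = coeff (Finsupp.single s 1) (X i) := by rw [← hfpi, hfp i]
          _ = if i = s then 1 else 0 := by
              rw [coeff_X']
              by_cases h : i = s
              · subst h; rw [if_pos rfl, if_pos rfl]
              · rw [if_neg, if_neg h]
                exact fun hh => h (Finsupp.single_left_injective one_ne_zero hh)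
      exact (Matrix.isUnit_iff_isUnit_det M).mpr (Matrix.isUnit_det_of_left_inverse hCM)
    · intro s
      have h6 : f (∑ j, t j • X j) = ∑ j, t j • f (X j) := by
        rw [map_sum]; simp_rw [map_smul]
      calc t' s = coeff (Finsupp.single s 1) (∑ j, t' j • X j) := (coeff_single_sum t' s).symm
        _ = coeff (Finsupp.single s 1) (∑ j, t j • f (X j)) := by rw [← h6, hcan s]
        _ = ∑ j, t j * M j s := by
            rw [coeff_sum]; simp_rw [coeff_smul, smul_eq_mul]; rfl
  · rintro ⟨M, hM, hMt⟩
    have hdet : IsUnit M.det := (Matrix.isUnit_iff_isUnit_det M).mp hM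
    have hMM : M * M⁻¹ = 1 := Matrix.mul_nonsing_inv M hdet
    have hMM' : M⁻¹ * M = 1 := Matrix.nonsing_inv_mul M hdet
    set F : MvPolynomial (Fin n) k →ₐ[k] MvPolynomial (Fin n) k :=
      aeval (fun j => ∑ s, M j s • (X s : MvPolynomial (Fin n) k)) with hF
    set G : MvPolynomial (Fin n) k →ₐ[k] MvPolynomial (Fin n) k :=
      aeval (fun j => ∑ s, M⁻¹ j s • (X s : MvPolynomial (Fin n) k)) with hG
    have hFG : F.comp G = AlgHom.id k _ := by
      apply MvPolynomial.algHom_ext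
      intro i
      simp only [AlgHom.comp_apply, AlgHom.id_apply, hG, aeval_X]
      exact aeval_lin M M⁻¹ hMM' i
    have hGF : G.comp F = AlgHom.id k _ := by
      apply MvPolynomial.algHom_ext
      intro i
      simp only [AlgHom.comp_apply, AlgHom.id_apply, hF, aeval_X]
      exact aeval_lin M⁻¹ M hMM i
    set f : MvPolynomial (Fin n) k ≃ₐ[k] MvPolynomial (Fin n) k :=
      AlgEquiv.ofAlgHom F G hFG hGF with hfdef
    have hfX : ∀ i, f (X i) = ∑ s, M i s • X s := fun i => by
      show F (X i) = _; rw [hF]; exact aeval_X _ i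
    have hsymmX : ∀ i, f.symm (X i) = ∑ s, M⁻¹ i s • X s := fun i => by
      show G (X i) = _; rw [hG]; exact aeval_X _ i
    have hf1 : ∀ i, (f (X i)).IsHomogeneous 1 := by
      intro i
      rw [hfX i]
      apply IsHomogeneous.sum
      intro s _
      rw [smul_eq_C_mul]
      exact isHomogeneous_C_mul_X _ _
    have hsymm1 : ∀ i, (f.symm (X i)).IsHomogeneous 1 := by
      intro i
      rw [hsymmX i]
      apply IsHomogeneous.sum
      intro s _
      rw [smul_eq_C_mul]
      exact isHomogeneous_C_mul_X _ _
    have hwt : f (∑ j, t j • X j) = ∑ j, t' j • X j := by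
      rw [map_sum]
      simp_rw [map_smul]
      rw [Finset.sum_congr rfl fun j _ => by rw [hfX j]]
      simp_rw [Finset.smul_sum, smul_smul]
      rw [Finset.sum_comm]
      simp_rw [← Finset.sum_smul]
      exact Finset.sum_congr rfl fun s _ => by rw [← hMt s]
    set D2 : MvPolynomial (Fin n) k →ₗ[k] MvPolynomial (Fin n) k :=
      f.toLinearMap ∘ₗ D ∘ₗ f.symm.toLinearMap with hD2def
    have hD2apply : ∀ a, D2 a = f (D (f.symm a)) := fun a => rfl
    have hLeib2 : ∀ (d : ℕ) (a b : MvPolynomial (Fin n) k), a.IsHomogeneous d →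
        D2 (a * b) = D2 a * b + ((-1 : k) ^ d) • (a * D2 b) := by
      intro d a b ha
      have hsa : (f.symm a).IsHomogeneous d := alghom_isHomogeneous' f.symm.toAlgHom hsymm1 ha
      rw [hD2apply, hD2apply, hD2apply, map_mul, hLeib d _ (f.symm b) hsa, map_add, map_mul,
        map_smul, map_mul, f.apply_symm_apply, f.apply_symm_apply]
    have hX2 : ∀ i, D2 (X i) = D' (X i) := by
      intro i
      have hback : ∑ s, M⁻¹ i s • f (X s) = X i := by
        simp_rw [← map_smul]
        rw [← map_sum, ← hsymmX i, f.apply_symm_apply]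
      rw [hD2apply, hsymmX i, map_sum]
      simp_rw [map_smul, hD]
      rw [map_sum]
      simp_rw [map_smul, map_mul, hwt, ← smul_mul_assoc]
      rw [← Finset.sum_mul, hback, hD' i]
    refine ⟨f, hf1, fun a => ?_⟩
    have hu := D_unique D2 D' hLeib2 hLeib' hX2 (f a)
    rw [hD2apply, f.symm_apply_apply] at hu
    exact hu
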